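/- Fix an integer β > 2 and a graph process starting from the empty graph H on n vertices, where each step is either (a) deleting an edge (u,v) of H with deg_H(u) + deg_H(v) > β, or (b) inserting a non-edge (u,v) with deg_H(u) + deg_H(v) < β - 1. Then any such sequence of moves has length at most nβ². -/

import Mathlib

open SimpleGraph

/-- The degree of a vertex. -/
noncomputable def deg {V : Type*} (H : SimpleGraph V) (v : V) : ℕ :=
  (H.neighborSet v).ncard

/-- A legal move of the process: either delete an edge `(u,v)` of `H` with
`deg_H(u) + deg_H(v) > β`, or insert a non-edge `(u,v)` with `deg_H(u) + deg_H(v) < β - 1`. -/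
def Move {V : Type*} (β : ℕ) (H H' : SimpleGraph V) : Prop :=
  (∃ u v, H.Adj u v ∧ β < deg H u + deg H v ∧ H' = H.deleteEdges {s(u, v)}) ∨
  (∃ u v, u ≠ v ∧ ¬ H.Adj u v ∧ deg H u + deg H v < β - 1 ∧
    H' = H ⊔ SimpleGraph.fromEdgeSet {s(u, v)})

section Aux

variable {V : Type*} [Fintype V]

/-- Per-vertex potential term. -/
noncomputable def phiTerm (β : ℕ) (H : SimpleGraph V) (w : V) : ℤ :=
  (2 * β - 1) * (deg H w : ℤ) - 2 * (deg H w : ℤ) ^ 2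

/-- The potential function. -/
noncomputable def phi (β : ℕ) (H : SimpleGraph V) : ℤ :=
  ∑ w : V, phiTerm β H w

lemma ns_ins_self (H : SimpleGraph V) (u v : V) (huv : u ≠ v) :
    (H ⊔ SimpleGraph.fromEdgeSet {s(u, v)}).neighborSet u = insert v (H.neighborSet u) := by
  ext x
  simp only [mem_neighborSet, sup_adj, fromEdgeSet_adj, Set.mem_singleton_iff, Sym2.eq_iff,
    Set.mem_insert_iff]
  constructor
  · rintro (h1 | ⟨(⟨-, h3⟩ | ⟨h2, h3⟩), -⟩)
    · exact Or.inr h1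
    · exact Or.inl h3
    · exact absurd h2 huv
  · rintro (rfl | h1) <;> tauto

lemma ns_ins_other (H : SimpleGraph V) (u v x : V) (hx : x ≠ u) (hx' : x ≠ v) :
    (H ⊔ SimpleGraph.fromEdgeSet {s(u, v)}).neighborSet x = H.neighborSet x := by
  ext y
  simp only [mem_neighborSet, sup_adj, fromEdgeSet_adj, Set.mem_singleton_iff, Sym2.eq_iff]
  constructor
  · rintro (h1 | ⟨(⟨h2, h3⟩ | ⟨h2, h3⟩), -⟩)
    · exact h1
    · exact absurd h2 hx
    · exact absurd h2 hx'
  · tauto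

lemma ns_del_self (H : SimpleGraph V) (u v : V) :
    (H.deleteEdges {s(u, v)}).neighborSet u = H.neighborSet u \ {v} := by
  ext x
  simp only [mem_neighborSet, deleteEdges_adj, Set.mem_singleton_iff, Sym2.eq_iff,
    Set.mem_diff]
  constructor
  · rintro ⟨h1, h2⟩
    refine ⟨h1, fun hxv => ?_⟩
    subst hxv
    exact h2 (Or.inl ⟨trivial, rfl⟩)
  · rintro ⟨h1, h2⟩
    refine ⟨h1, ?_⟩
    rintro (⟨-, rfl⟩ | ⟨rfl, rfl⟩)
    · exact h2 rfl
    · exact H.loopless.irrefl _ h1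

lemma ns_del_other (H : SimpleGraph V) (u v x : V) (hx : x ≠ u) (hx' : x ≠ v) :
    (H.deleteEdges {s(u, v)}).neighborSet x = H.neighborSet x := by
  ext y
  simp only [mem_neighborSet, deleteEdges_adj, Set.mem_singleton_iff, Sym2.eq_iff]
  constructor
  · tauto
  · intro h1
    refine ⟨h1, ?_⟩
    rintro (⟨h2, -⟩ | ⟨h2, -⟩)
    · exact hx h2
    · exact hx' h2

lemma deg_ins_self (H : SimpleGraph V) (u v : V) (huv : u ≠ v) (h : ¬ H.Adj u v) :
    deg (H ⊔ SimpleGraph.fromEdgeSet {s(u, v)}) u = deg H u + 1 := by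
  rw [deg, ns_ins_self H u v huv, Set.ncard_insert_of_notMem (by simpa using h) (Set.toFinite _)]
  rfl

lemma deg_del_self (H : SimpleGraph V) (u v : V) (h : H.Adj u v) :
    deg (H.deleteEdges {s(u, v)}) u + 1 = deg H u := by
  rw [deg, ns_del_self H u v]
  exact Set.ncard_diff_singleton_add_one (by simpa using h) (Set.toFinite _)

lemma sym2_comm (u v : V) : ({s(u, v)} : Set (Sym2 V)) = {s(v, u)} := by
  rw [Sym2.eq_swap]

lemma phi_diff (β : ℕ) (H H' : SimpleGraph V) (u v : V) (huv : u ≠ v)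
    (hdw : ∀ x, x ≠ u → x ≠ v → deg H' x = deg H x) :
    phi β H' - phi β H = (phiTerm β H' u - phiTerm β H u) +
      (phiTerm β H' v - phiTerm β H v) := by
  classical
  rw [phi, phi, ← Finset.sum_sub_distrib]
  rw [← Finset.sum_subset (Finset.subset_univ ({u, v} : Finset V))
    (fun x _ hx => by
      simp only [Finset.mem_insert, Finset.mem_singleton, not_or] at hx
      simp [phiTerm, hdw x hx.1 hx.2])]
  rw [Finset.sum_pair huv]

lemma phi_step_insert (β : ℕ) (hβ : 2 < β) (H : SimpleGraph V) (u v : V) (huv : u ≠ v)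
    (h : ¬ H.Adj u v) (hdeg : deg H u + deg H v < β - 1) :
    phi β H + 2 ≤ phi β (H ⊔ SimpleGraph.fromEdgeSet {s(u, v)}) := by
  set H' := H ⊔ SimpleGraph.fromEdgeSet {s(u, v)} with hH'
  have du : deg H' u = deg H u + 1 := deg_ins_self H u v huv h
  have dv : deg H' v = deg H v + 1 := by
    rw [hH', sym2_comm]
    exact deg_ins_self H v u huv.symm (fun h' => h h'.symm)
  have key := phi_diff β H H' u v huv
    (fun x hx hx' => by rw [hH', deg, ns_ins_other H u v x hx hx']; rfl)
  have hsum : (deg H u : ℤ) + (deg H v : ℤ) ≤ (β : ℤ) - 2 := by omega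
  have hb : (3 : ℤ) ≤ (β : ℤ) := by exact_mod_cast hβ
  simp only [phiTerm, du, dv] at key
  push_cast at key
  nlinarith [key]

lemma phi_step_delete (β : ℕ) (hβ : 2 < β) (H : SimpleGraph V) (u v : V)
    (h : H.Adj u v) (hdeg : β < deg H u + deg H v) :
    phi β H + 2 ≤ phi β (H.deleteEdges {s(u, v)}) := by
  set H' := H.deleteEdges {s(u, v)} with hH'
  have du : deg H' u + 1 = deg H u := deg_del_self H u v h
  have dv : deg H' v + 1 = deg H v := by
    rw [hH', sym2_comm]
    exact deg_del_self H v u h.symm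
  have key := phi_diff β H H' u v h.ne
    (fun x hx hx' => by rw [hH', deg, ns_del_other H u v x hx hx']; rfl)
  have hsum : (β : ℤ) + 1 ≤ (deg H u : ℤ) + (deg H v : ℤ) := by omega
  have hb : (3 : ℤ) ≤ (β : ℤ) := by exact_mod_cast hβ
  rw [phiTerm, phiTerm, phiTerm, phiTerm, ← du, ← dv] at key
  push_cast at key
  nlinarith [key]

lemma phi_le (β : ℕ) (H : SimpleGraph V) :
    phi β H ≤ (Fintype.card V : ℤ) * (2 * (β : ℤ) ^ 2) := by
  have : ∀ w : V, phiTerm β H w ≤ 2 * (β : ℤ) ^ 2 := by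
    intro w
    have h1 : (0 : ℤ) ≤ (deg H w : ℤ) := Int.natCast_nonneg _
    have h2 : (0 : ℤ) ≤ (β : ℤ) := Int.natCast_nonneg _
    rw [phiTerm]
    nlinarith [sq_nonneg ((deg H w : ℤ) - (β : ℤ))]
  calc phi β H ≤ ∑ _w : V, 2 * (β : ℤ) ^ 2 := Finset.sum_le_sum (fun w _ => this w)
    _ = (Fintype.card V : ℤ) * (2 * (β : ℤ) ^ 2) := by
        rw [Finset.sum_const, Finset.card_univ]; ring

lemma phi_bot (β : ℕ) : phi β (⊥ : SimpleGraph V) = 0 := by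
  have hd : ∀ v : V, deg (⊥ : SimpleGraph V) v = 0 := by
    intro v
    have : (⊥ : SimpleGraph V).neighborSet v = ∅ := by ext x; simp
    simp [deg, this]
  simp [phi, phiTerm, hd]

end Aux

/-- starting from the empty graph on `n` vertices, any sequence of legal
moves has length at most `n β²`. -/
theorem stmt4 {V : Type*} [Fintype V] (β : ℕ) (hβ : 2 < β) (L : ℕ)
    (Hs : ℕ → SimpleGraph V) (h0 : Hs 0 = ⊥)
    (hmove : ∀ i < L, Move β (Hs i) (Hs (i + 1))) :
    L ≤ Fintype.card V * β ^ 2 := by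
  have key : ∀ i ≤ L, 2 * (i : ℤ) ≤ phi β (Hs i) := by
    intro i hi
    induction i with
    | zero => simp [h0, phi_bot]
    | succ n ih =>
      have hn : n ≤ L := Nat.le_of_succ_le hi
      have ih' := ih hn
      have hm := hmove n (Nat.lt_of_succ_le hi)
      rcases hm with ⟨u, v, hadj, hdeg, hH'⟩ | ⟨u, v, huv, hnadj, hdeg, hH'⟩
      · have := phi_step_delete β hβ (Hs n) u v hadj hdeg
        rw [← hH'] at this
        push_cast
        linarith
      · have := phi_step_insert β hβ (Hs n) u v huv hnadj hdeg
        rw [← hH'] at this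
        push_cast
        linarith
  have h1 := key L le_rfl
  have h2 := phi_le β (Hs L)
  have h3 : 2 * (L : ℤ) ≤ (Fintype.card V : ℤ) * (2 * (β : ℤ) ^ 2) := le_trans h1 h2
  have h4 : (L : ℤ) ≤ (Fintype.card V : ℤ) * (β : ℤ) ^ 2 := by linarith
  exact_mod_cast h4
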